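/- Let T > 0 and let μ : [0,T] → ℝ be continuous with μ(0) = 0. Let f : ℝ × [0,T] × ℝ → ℝ be measurable with continuous partial derivatives ∂f/∂y(y,t,x) and ∂f/∂t(y,t,x), and suppose there are functions g, g₁, g₂ ∈ L¹(ℝ, dx) with |f(y,t,x)| ≤ g(x), |∂f/∂y(y,t,x)| ≤ g₁(x), and |∂f/∂t(y,t,x)| ≤ g₂(x) for all (y,t,x). Define F(z,t,x) = ∫_0^z f(y,t,x) dy and F̃(z,t) = ∫_0^z ∫_ℝ f(y,t,x) dx dy. Then ∫_ℝ ( F(μ(T), T, x) − ∫_0^T (∂F/∂t)(μ(t), t, x) dt ) dx = F̃(μ(T), T) − ∫_0^T (∂F̃/∂t)(μ(t), t) dt. -/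
import Mathlib


open MeasureTheory Set

private lemma ii_eq (F : ℝ → ℝ) (a b : ℝ) :
    ∫ y in a..b, F y = (∫ y in Ioc a b, F y) - ∫ y in Ioc b a, F y := rfl

private lemma finIoc (a b : ℝ) : IsFiniteMeasure ((volume : Measure ℝ).restrict (Ioc a b)) :=
  ⟨by rw [Measure.restrict_apply_univ]; exact measure_Ioc_lt_top⟩

private lemma prodInt {s : Set ℝ} (h : ℝ → ℝ → ℝ) (g : ℝ → ℝ)
    (hm : AEStronglyMeasurable (fun p : ℝ × ℝ => h p.2 p.1)
      ((volume : Measure ℝ).prod (volume.restrict s)))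
    (hg : Integrable g) (hfin : IsFiniteMeasure ((volume : Measure ℝ).restrict s))
    (hb : ∀ y x, |h y x| ≤ g x) :
    Integrable (fun p : ℝ × ℝ => h p.2 p.1) ((volume : Measure ℝ).prod (volume.restrict s)) := by
  haveI := hfin
  refine Integrable.mono' (hg.mul_prod (integrable_const 1)) hm ?_
  exact Filter.Eventually.of_forall fun p => by
    simpa [Real.norm_eq_abs] using hb p.2 p.1

private lemma swap_interval (b : ℝ) (h : ℝ → ℝ → ℝ) (g : ℝ → ℝ)
    (hm : Measurable (fun p : ℝ × ℝ => h p.1 p.2))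
    (hg : Integrable g) (hb : ∀ y x, |h y x| ≤ g x) :
    Integrable (fun x => ∫ y in (0:ℝ)..b, h y x) ∧
    (∫ x : ℝ, ∫ y in (0:ℝ)..b, h y x) = ∫ y in (0:ℝ)..b, ∫ x : ℝ, h y x := by
  have hm' : Measurable (fun p : ℝ × ℝ => h p.2 p.1) := hm.comp measurable_swap
  have key : ∀ a c : ℝ, Integrable (fun p : ℝ × ℝ => h p.2 p.1)
      ((volume : Measure ℝ).prod (volume.restrict (Ioc a c))) :=
    fun a c => prodInt h g hm'.aestronglyMeasurable hg (finIoc a c) hb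
  have h1 := key 0 b
  have h2 := key b 0
  have i1 : Integrable (fun x => ∫ y in Ioc (0:ℝ) b, h y x) := h1.integral_prod_left
  have i2 : Integrable (fun x => ∫ y in Ioc b (0:ℝ), h y x) := h2.integral_prod_left
  constructor
  · exact (i1.sub i2).congr (Filter.Eventually.of_forall fun x => (ii_eq _ 0 b).symm)
  · calc (∫ x : ℝ, ∫ y in (0:ℝ)..b, h y x)
        = ∫ x : ℝ, ((∫ y in Ioc (0:ℝ) b, h y x) - ∫ y in Ioc b (0:ℝ), h y x) := by
          simp only [ii_eq]
      _ = (∫ x : ℝ, ∫ y in Ioc (0:ℝ) b, h y x) - ∫ x : ℝ, ∫ y in Ioc b (0:ℝ), h y x :=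
          integral_sub i1 i2
      _ = (∫ y in Ioc (0:ℝ) b, ∫ x : ℝ, h y x) - ∫ y in Ioc b (0:ℝ), ∫ x : ℝ, h y x := by
          rw [integral_integral_swap (f := fun x y => h y x) h1,
            integral_integral_swap (f := fun x y => h y x) h2]
      _ = ∫ y in (0:ℝ)..b, ∫ x : ℝ, h y x := (ii_eq _ 0 b).symm

private lemma meas_indicator (a b : ℝ × ℝ → ℝ) (ha : Measurable a) (hb : Measurable b)
    (F : ℝ → ℝ → ℝ → ℝ) (hF : Measurable fun p : ℝ × ℝ × ℝ => F p.1 p.2.1 p.2.2) :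
    StronglyMeasurable (fun p : ℝ × ℝ =>
      ∫ y, (Ioc (a p) (b p)).indicator (fun y => F y p.1 p.2) y) := by
  have key : ∀ (p : ℝ × ℝ) (y : ℝ), (Ioc (a p) (b p)).indicator (fun y => F y p.1 p.2) y
      = ({q : (ℝ × ℝ) × ℝ | a q.1 < q.2} ∩ {q : (ℝ × ℝ) × ℝ | q.2 ≤ b q.1}).indicator
          (fun q => F q.2 q.1.1 q.1.2) (p, y) := by
    intro p y
    simp [Set.indicator_apply, Set.mem_Ioc, Set.mem_setOf_eq, and_comm]
  simp only [key]
  have hFm : Measurable fun q : (ℝ × ℝ) × ℝ => F q.2 q.1.1 q.1.2 :=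
    hF.comp (measurable_snd.prodMk
      ((measurable_fst.comp measurable_fst).prodMk (measurable_snd.comp measurable_fst)))
  have hset : MeasurableSet ({q : (ℝ × ℝ) × ℝ | a q.1 < q.2} ∩ {q : (ℝ × ℝ) × ℝ | q.2 ≤ b q.1}) :=
    (measurableSet_lt (ha.comp measurable_fst) measurable_snd).inter
      (measurableSet_le measurable_snd (hb.comp measurable_fst))
  exact StronglyMeasurable.integral_prod_right' (hFm.indicator hset).stronglyMeasurable

private lemma meas_param (m : ℝ → ℝ) (hmm : Measurable m) (F : ℝ → ℝ → ℝ → ℝ)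
    (hF : Measurable fun p : ℝ × ℝ × ℝ => F p.1 p.2.1 p.2.2) :
    StronglyMeasurable (fun p : ℝ × ℝ => ∫ y in (0:ℝ)..(m p.1), F y p.1 p.2) := by
  have key : ∀ p : ℝ × ℝ, (∫ y in (0:ℝ)..(m p.1), F y p.1 p.2)
      = (∫ y, (Ioc (0:ℝ) (m p.1)).indicator (fun y => F y p.1 p.2) y)
        - ∫ y, (Ioc (m p.1) (0:ℝ)).indicator (fun y => F y p.1 p.2) y := by
    intro p
    rw [ii_eq, integral_indicator measurableSet_Ioc, integral_indicator measurableSet_Ioc]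
  simp only [key]
  exact (meas_indicator (fun _ => (0:ℝ)) (fun p => m p.1) measurable_const
      (hmm.comp measurable_fst) F hF).sub
    (meas_indicator (fun p => m p.1) (fun _ => (0:ℝ)) (hmm.comp measurable_fst)
      measurable_const F hF)

set_option maxHeartbeats 1000000 in
/-- Fubini theorem for the symmetric integral with respect to a continuous stochastic
measure (Lemma 2.2 of the paper), written via the chain-rule representation: with
`F(z,t,x) = ∫_0^z f(y,t,x) dy`, `∂F/∂t(z,t,x) = ∫_0^z ∂f/∂t(y,t,x) dy`,
`F̃(z,t) = ∫_0^z ∫_ℝ f(y,t,x) dx dy` and `∂F̃/∂t(z,t) = ∫_0^z ∫_ℝ ∂f/∂t(y,t,x) dx dy`,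
one has `∫_ℝ (F(μ_T,T,x) - ∫_0^T ∂F/∂t(μ_t,t,x) dt) dx = F̃(μ_T,T) - ∫_0^T ∂F̃/∂t(μ_t,t) dt`. -/
theorem fubini_symmetric_integral
    (T : ℝ) (hT : 0 < T)
    (μ : ℝ → ℝ) (hμ : ContinuousOn μ (Icc 0 T)) (hμ0 : μ 0 = 0)
    (f f'y f't : ℝ → ℝ → ℝ → ℝ)
    (hfmeas : Measurable (fun p : ℝ × ℝ × ℝ => f p.1 p.2.1 p.2.2))
    (hf'y : ∀ (y t x : ℝ), HasDerivAt (fun z => f z t x) (f'y y t x) y)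
    (hf'ycont : Continuous (fun p : ℝ × ℝ × ℝ => f'y p.1 p.2.1 p.2.2))
    (hf't : ∀ (y t x : ℝ), HasDerivAt (fun s => f y s x) (f't y t x) t)
    (hf'tcont : Continuous (fun p : ℝ × ℝ × ℝ => f't p.1 p.2.1 p.2.2))
    (g g₁ g₂ : ℝ → ℝ)
    (hg : Integrable g) (hg₁ : Integrable g₁) (hg₂ : Integrable g₂)
    (hfg : ∀ (y t x : ℝ), |f y t x| ≤ g x)
    (hfg₁ : ∀ (y t x : ℝ), |f'y y t x| ≤ g₁ x)
    (hfg₂ : ∀ (y t x : ℝ), |f't y t x| ≤ g₂ x) :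
    (∫ x : ℝ,
        ((∫ y in (0:ℝ)..(μ T), f y T x) -
          ∫ t in (0:ℝ)..T, ∫ y in (0:ℝ)..(μ t), f't y t x)) =
      (∫ y in (0:ℝ)..(μ T), ∫ x : ℝ, f y T x) -
        ∫ t in (0:ℝ)..T, ∫ y in (0:ℝ)..(μ t), ∫ x : ℝ, f't y t x := by
  haveI : IsFiniteMeasure ((volume : Measure ℝ).restrict (Ioc 0 T)) := finIoc 0 T
  -- a bound on |μ| over [0,T]
  obtain ⟨C, hC⟩ := isCompact_Icc.exists_bound_of_continuousOn hμ
  have hg₂0 : ∀ x, 0 ≤ g₂ x := fun x => (abs_nonneg _).trans (hfg₂ 0 0 x)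
  -- swap for the first term
  have hfT : Measurable (fun p : ℝ × ℝ => f p.1 T p.2) :=
    hfmeas.comp (measurable_fst.prodMk (measurable_const.prodMk measurable_snd))
  obtain ⟨hA_int, hA_eq⟩ := swap_interval (μ T) (fun y x => f y T x) g hfT hg
    (fun y x => hfg y T x)
  -- pointwise (in t) swap for the inner dx/dy integrals
  have hswap_t : ∀ t : ℝ, (∫ x : ℝ, ∫ y in (0:ℝ)..(μ t), f't y t x)
      = ∫ y in (0:ℝ)..(μ t), ∫ x : ℝ, f't y t x := fun t =>
    (swap_interval (μ t) (fun y x => f't y t x) g₂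
      (hf'tcont.measurable.comp (measurable_fst.prodMk
        (measurable_const.prodMk measurable_snd))) hg₂ (fun y x => hfg₂ y t x)).2
  -- joint a.e. strong measurability of (t,x) ↦ ∫ y in 0..μ t, f't y t x
  have hμae : AEMeasurable μ (volume.restrict (Ioc 0 T)) :=
    (hμ.mono Ioc_subset_Icc_self).aemeasurable measurableSet_Ioc
  have hGsm : StronglyMeasurable
      (fun p : ℝ × ℝ => ∫ y in (0:ℝ)..(hμae.mk μ p.1), f't y p.1 p.2) :=
    meas_param (hμae.mk μ) hμae.measurable_mk f't hf'tcont.measurable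
  have haem : ∀ᵐ p ∂(((volume : Measure ℝ).restrict (Ioc 0 T)).prod (volume : Measure ℝ)),
      μ p.1 = hμae.mk μ p.1 :=
    Measure.quasiMeasurePreserving_fst.ae hμae.ae_eq_mk
  have hG1 : AEStronglyMeasurable (fun p : ℝ × ℝ => ∫ y in (0:ℝ)..(μ p.1), f't y p.1 p.2)
      (((volume : Measure ℝ).restrict (Ioc 0 T)).prod volume) :=
    hGsm.aestronglyMeasurable.congr
      (haem.mono fun p hp => by simp only [hp])
  have haem2 : ∀ᵐ p ∂((volume : Measure ℝ).prod ((volume : Measure ℝ).restrict (Ioc 0 T))),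
      μ p.2 = hμae.mk μ p.2 :=
    Measure.quasiMeasurePreserving_snd.ae hμae.ae_eq_mk
  have hG2 : AEStronglyMeasurable (fun p : ℝ × ℝ => ∫ y in (0:ℝ)..(μ p.2), f't y p.2 p.1)
      ((volume : Measure ℝ).prod ((volume : Measure ℝ).restrict (Ioc 0 T))) :=
    ((hGsm.comp_measurable measurable_swap).aestronglyMeasurable).congr
      (haem2.mono fun p hp => by simp [Function.comp, hp])
  -- integrability on the product for the t-swap
  have haeIoc : ∀ᵐ p ∂((volume : Measure ℝ).prod ((volume : Measure ℝ).restrict (Ioc 0 T))),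
      p.2 ∈ Ioc (0:ℝ) T :=
    Measure.quasiMeasurePreserving_snd.ae (ae_restrict_mem measurableSet_Ioc)
  have hKint : Integrable (fun p : ℝ × ℝ => ∫ y in (0:ℝ)..(μ p.2), f't y p.2 p.1)
      ((volume : Measure ℝ).prod ((volume : Measure ℝ).restrict (Ioc 0 T))) := by
    refine Integrable.mono' ((hg₂.const_mul C).mul_prod (integrable_const 1)) hG2 ?_
    filter_upwards [haeIoc] with p hp
    have h1 : ‖∫ y in (0:ℝ)..(μ p.2), f't y p.2 p.1‖ ≤ g₂ p.1 * |μ p.2 - 0| :=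
      intervalIntegral.norm_integral_le_of_norm_le_const fun y _ => by
        simpa [Real.norm_eq_abs] using hfg₂ y p.2 p.1
    have h2 : |μ p.2 - 0| ≤ C := by
      simpa [Real.norm_eq_abs] using hC p.2 (Ioc_subset_Icc_self hp)
    calc ‖∫ y in (0:ℝ)..(μ p.2), f't y p.2 p.1‖ ≤ g₂ p.1 * |μ p.2 - 0| := h1
      _ ≤ g₂ p.1 * C := mul_le_mul_of_nonneg_left h2 (hg₂0 p.1)
      _ = C * g₂ p.1 * 1 := by ring
  have hIntB : Integrable (fun x : ℝ => ∫ t in (0:ℝ)..T, ∫ y in (0:ℝ)..(μ t), f't y t x) := by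
    refine hKint.integral_prod_left.congr (Filter.Eventually.of_forall fun x => ?_)
    exact (intervalIntegral.integral_of_le hT.le).symm
  rw [integral_sub hA_int hIntB, hA_eq]
  congr 1
  calc (∫ x : ℝ, ∫ t in (0:ℝ)..T, ∫ y in (0:ℝ)..(μ t), f't y t x)
      = ∫ x : ℝ, ∫ t in Ioc (0:ℝ) T, ∫ y in (0:ℝ)..(μ t), f't y t x := by
        simp only [intervalIntegral.integral_of_le hT.le]
    _ = ∫ t in Ioc (0:ℝ) T, ∫ x : ℝ, ∫ y in (0:ℝ)..(μ t), f't y t x :=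
        integral_integral_swap (f := fun x t => ∫ y in (0:ℝ)..(μ t), f't y t x) hKint
    _ = ∫ t in Ioc (0:ℝ) T, ∫ y in (0:ℝ)..(μ t), ∫ x : ℝ, f't y t x := by
        simp only [hswap_t]
    _ = ∫ t in (0:ℝ)..T, ∫ y in (0:ℝ)..(μ t), ∫ x : ℝ, f't y t x :=
        (intervalIntegral.integral_of_le hT.le).symm
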